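/- If G is a König-Egerváry graph without isolated vertices and core(G) = {v} is a singleton, then G has a perfect matching and v has degree 1. -/

import Mathlib

open SimpleGraph

variable {V : Type*}

/-- A set of vertices is independent: no two of its vertices are adjacent. -/
def IsIndep (G : SimpleGraph V) (s : Set V) : Prop :=
  s.Pairwise fun a b => ¬ G.Adj a b

/-- The independence number α(G). -/
noncomputable def alphaNum (G : SimpleGraph V) : ℕ :=
  sSup {n | ∃ s : Set V, IsIndep G s ∧ s.ncard = n}

/-- The matching number μ(G). -/
noncomputable def muNum (G : SimpleGraph V) : ℕ :=
  sSup {n | ∃ M : SimpleGraph.Subgraph G, M.IsMatching ∧ M.edgeSet.ncard = n}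

/-- The neighborhood N(A) of a set of vertices. -/
def nbhd (G : SimpleGraph V) (A : Set V) : Set V := {v | ∃ a ∈ A, G.Adj a v}

/-- The difference d(A) = |A| - |N(A)| of a set of vertices. -/
noncomputable def diffSet (G : SimpleGraph V) (A : Set V) : ℤ :=
  (A.ncard : ℤ) - (nbhd G A).ncard

/-- The critical difference d(G). -/
noncomputable def critDiff (G : SimpleGraph V) : ℤ :=
  sSup {d | ∃ I : Set V, IsIndep G I ∧ diffSet G I = d}

/-- A critical independent set: an independent set attaining the critical difference. -/
def IsCriticalIndep (G : SimpleGraph V) (A : Set V) : Prop :=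
  IsIndep G A ∧ diffSet G A = critDiff G

/-- ker(G): the intersection of all critical independent sets. -/
noncomputable def kerSet (G : SimpleGraph V) : Set V :=
  ⋂₀ {A | IsCriticalIndep G A}

/-- A maximum independent set. -/
noncomputable def IsMaxIndep (G : SimpleGraph V) (S : Set V) : Prop :=
  IsIndep G S ∧ S.ncard = alphaNum G

/-- core(G): the intersection of all maximum independent sets. -/
noncomputable def coreSet (G : SimpleGraph V) : Set V :=
  ⋂₀ {S | IsMaxIndep G S}

/-- A König–Egerváry graph: α(G) + μ(G) = n(G). -/
def KonigEgervary (G : SimpleGraph V) : Prop :=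
  alphaNum G + muNum G = Nat.card V

section AuxProof


variable [Fintype V] {G : SimpleGraph V}

lemma matching_edge_unique {M : Subgraph G} (hM : M.IsMatching) {e : Sym2 V} {u b : V}
    (he : e ∈ M.edgeSet) (hu : u ∈ e) (hb : M.Adj u b) : e = s(u, b) := by
  induction e with
  | _ a c =>
    rw [Subgraph.mem_edgeSet] at he
    rcases Sym2.mem_iff.mp hu with rfl | rfl
    · obtain ⟨y, _, hy⟩ := hM (M.edge_vert he)
      rw [hy c he, hy b hb]
    · obtain ⟨y, _, hy⟩ := hM (M.edge_vert he.symm)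
      rw [Sym2.eq_swap, hy a he.symm, hy b hb]

lemma exists_max_matching (G : SimpleGraph V) :
    ∃ M : Subgraph G, M.IsMatching ∧ M.edgeSet.ncard = muNum G := by
  have hmem : muNum G ∈ {n | ∃ M : Subgraph G, M.IsMatching ∧ M.edgeSet.ncard = n} := by
    apply Nat.sSup_mem
    · exact ⟨0, ⊥, fun v hv => absurd hv (by simp), by simp⟩
    · refine ⟨Nat.card (Sym2 V), ?_⟩
      rintro n ⟨M, _, rfl⟩
      simpa [Set.ncard_univ] using Set.ncard_le_ncard (Set.subset_univ M.edgeSet)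
  exact hmem

lemma key_lemma {M : Subgraph G} (hM : M.IsMatching) (hμ : M.edgeSet.ncard = muNum G)
    (hKE : KonigEgervary G) {S : Set V} (hS : IsMaxIndep G S) :
    (∀ u, u ∉ S → u ∈ M.support) ∧ (∀ a b, M.Adj a b → a ∉ S → b ∈ S) := by
  classical
  set f : Sym2 V → V := fun e => if e.out.1 ∈ S then e.out.2 else e.out.1 with hf
  have hfe : ∀ e ∈ M.edgeSet, f e ∈ e ∧ f e ∉ S := by
    intro e he
    have hout : s(e.out.1, e.out.2) = e := by
      rw [Sym2.mk, Prod.mk.eta, e.out_eq]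
    have hadj : M.Adj e.out.1 e.out.2 := by
      rw [← Subgraph.mem_edgeSet, hout]; exact he
    by_cases h : e.out.1 ∈ S
    · constructor
      · show (if e.out.1 ∈ S then e.out.2 else e.out.1) ∈ e
        rw [if_pos h]; exact Sym2.out_snd_mem e
      · show (if e.out.1 ∈ S then e.out.2 else e.out.1) ∉ S
        rw [if_pos h]
        intro h2
        exact hS.1 h h2 (M.adj_sub hadj).ne (M.adj_sub hadj)
    · constructor
      · show (if e.out.1 ∈ S then e.out.2 else e.out.1) ∈ e
        rw [if_neg h]; exact Sym2.out_fst_mem e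
      · show (if e.out.1 ∈ S then e.out.2 else e.out.1) ∉ S
        rw [if_neg h]; exact h
  -- injectivity
  have hinj : Set.InjOn f M.edgeSet := by
    intro e1 h1 e2 h2 heq
    obtain ⟨c1, he1⟩ := Sym2.mem_iff_exists.mp (hfe e1 h1).1
    obtain ⟨c2, he2⟩ := Sym2.mem_iff_exists.mp (hfe e2 h2).1
    have ha1 : M.Adj (f e1) c1 := by rw [← Subgraph.mem_edgeSet, ← he1]; exact h1
    have ha2 : M.Adj (f e2) c2 := by rw [← Subgraph.mem_edgeSet, ← he2]; exact h2
    rw [heq] at he1 ha1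
    obtain ⟨y, _, hy⟩ := hM (M.edge_vert ha1)
    have hcc : c1 = c2 := by rw [hy c1 ha1, hy c2 ha2]
    rw [hcc] at he1
    exact he1.trans he2.symm
  -- cardinality
  have hSc : Sᶜ.ncard = muNum G := by
    have hke : alphaNum G + muNum G = Nat.card V := hKE
    have h1 := Set.ncard_add_ncard_compl S
    rw [hS.2, Nat.card_eq_fintype_card] at h1
    have h2 : Nat.card V = Fintype.card V := Nat.card_eq_fintype_card
    omega
  have himg : f '' M.edgeSet = Sᶜ := by
    apply Set.eq_of_subset_of_ncard_le
    · rintro u ⟨e, he, rfl⟩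
      exact (hfe e he).2
    · rw [Set.ncard_image_of_injOn hinj, hμ, hSc]
    · exact Set.toFinite _
  constructor
  · intro u hu
    have : u ∈ f '' M.edgeSet := himg ▸ hu
    obtain ⟨e, he, rfl⟩ := this
    obtain ⟨c, hc⟩ := Sym2.mem_iff_exists.mp (hfe e he).1
    exact ⟨c, show M.Adj (f e) c by rw [← Subgraph.mem_edgeSet, ← hc]; exact he⟩
  · intro a b hab haS
    by_contra hbS
    have hane : a ≠ b := (M.adj_sub hab).ne
    have hmema : a ∈ f '' M.edgeSet := himg ▸ haS
    have hmemb : b ∈ f '' M.edgeSet := himg ▸ hbS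
    obtain ⟨e1, he1, hfe1⟩ := hmema
    obtain ⟨e2, he2, hfe2⟩ := hmemb
    have h1 : e1 = s(a, b) := matching_edge_unique hM he1 (hfe1 ▸ (hfe e1 he1).1) hab
    have h2 : e2 = s(b, a) := matching_edge_unique hM he2 (hfe2 ▸ (hfe e2 he2).1) hab.symm
    have : e1 = e2 := by rw [h1, h2, Sym2.eq_swap]
    exact hane (by rw [← hfe1, ← hfe2, this])


lemma main_case {v : V} (hKE : KonigEgervary G) (hcore : coreSet G = {v})
    {M : Subgraph G} (hM : M.IsMatching) (hμ : M.edgeSet.ncard = muNum G)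
    (hv : v ∈ M.support) :
    (∃ M : SimpleGraph.Subgraph G, M.IsPerfectMatching) ∧ (G.neighborSet v).ncard = 1 := by
  have hcore_mem : ∀ u : V, (∀ S, IsMaxIndep G S → u ∈ S) → u = v := by
    intro u hu
    have : u ∈ coreSet G := Set.mem_sInter.mpr fun S hS => hu S hS
    rw [hcore] at this
    exact this
  have hvS : ∀ S, IsMaxIndep G S → v ∈ S := by
    intro S hS
    have : v ∈ coreSet G := by rw [hcore]; exact rfl
    exact this S hS
  have hsupp : ∀ u : V, u ∈ M.support := by
    intro u
    by_contra hu
    have : u = v := by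
      apply hcore_mem
      intro S hS
      by_contra huS
      exact hu ((key_lemma hM hμ hKE hS).1 u huS)
    exact hu (this ▸ hv)
  have hspan : M.IsSpanning := fun u => M.support_subset_verts (hsupp u)
  refine ⟨⟨M, hM, hspan⟩, ?_⟩
  obtain ⟨m, hvm⟩ := hv
  have hnbr : G.neighborSet v = {m} := by
    ext w
    simp only [mem_neighborSet, Set.mem_singleton_iff]
    constructor
    · intro hvw
      obtain ⟨x, hwx⟩ := hsupp w
      have hxv : x = v := by
        apply hcore_mem
        intro S hS
        have hvS' : v ∈ S := hvS S hS
        have hwS : w ∉ S := by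
          intro hwS
          exact hS.1 hvS' hwS hvw.ne hvw
        exact (key_lemma hM hμ hKE hS).2 w x hwx hwS
      obtain ⟨y, _, hy⟩ := hM (M.edge_vert hvm)
      rw [hy m hvm, hy w (hxv ▸ hwx).symm]
    · rintro rfl
      exact M.adj_sub hvm
  rw [hnbr, Set.ncard_singleton]



theorem stmt_4_aux (G : SimpleGraph V) (hKE : KonigEgervary G)
    (hiso : ∀ v : V, ∃ w : V, G.Adj v w) (v : V) (hcore : coreSet G = {v}) :
    (∃ M : SimpleGraph.Subgraph G, M.IsPerfectMatching) ∧ (G.neighborSet v).ncard = 1 := by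
  classical
  obtain ⟨M, hM, hμ⟩ := exists_max_matching G
  have hcore_mem : ∀ u : V, (∀ S, IsMaxIndep G S → u ∈ S) → u = v := by
    intro u hu
    have : u ∈ coreSet G := Set.mem_sInter.mpr fun S hS => hu S hS
    rw [hcore] at this
    exact this
  by_cases hv : v ∈ M.support
  · exact main_case hKE hcore hM hμ hv
  -- v is unsaturated: augment
  obtain ⟨w, hvw⟩ := hiso v
  have hw : w ∈ M.support := by
    by_contra hw
    have : w = v := by
      apply hcore_mem
      intro S hS
      by_contra hwS
      exact hw ((key_lemma hM hμ hKE hS).1 w hwS)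
    exact hvw.ne' this
  obtain ⟨x, hwx⟩ := hw
  have hxv : x ≠ v := fun h => hv ⟨w, (h ▸ hwx).symm⟩
  have hwv : w ≠ v := hvw.ne'
  have hwx_ne : w ≠ x := (M.adj_sub hwx).ne
  have hverts : M.verts = M.support := (hM.support_eq_verts).symm
  -- the matching on the rest
  set N : Subgraph G := M.induce (M.verts \ {w, x}) with hN
  have hNadj : ∀ a b : V, N.Adj a b ↔ a ∈ M.verts \ {w, x} ∧ b ∈ M.verts \ {w, x} ∧ M.Adj a b :=
    fun a b => Iff.rfl
  -- partners avoid w, x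
  have hpart : ∀ a b : V, M.Adj a b → a ∉ ({w, x} : Set V) → b ∉ ({w, x} : Set V) := by
    intro a b hab ha hb
    apply ha
    rcases hb with rfl | hb
    · obtain ⟨y, _, hy⟩ := hM (M.edge_vert hwx)
      right
      rw [Set.mem_singleton_iff, (hy a hab.symm).trans (hy x hwx).symm]
    · simp only [Set.mem_singleton_iff] at hb
      subst hb
      obtain ⟨y, _, hy⟩ := hM (M.edge_vert hwx.symm)
      left
      exact (hy a hab.symm).trans (hy w hwx.symm).symm
  have hNmatch : N.IsMatching := by
    intro u hu
    obtain ⟨hu1, hu2⟩ := hu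
    obtain ⟨y, hy1, hy2⟩ := hM hu1
    have hyn : y ∉ ({w, x} : Set V) := hpart u y hy1 hu2
    refine ⟨y, ⟨⟨hu1, hu2⟩, ⟨M.edge_vert hy1.symm, hyn⟩, hy1⟩, ?_⟩
    rintro z ⟨_, _, hz⟩
    exact hy2 z hz
  have hvN : v ∉ M.verts := by rw [hverts]; exact hv
  set P : Subgraph G := G.subgraphOfAdj hvw with hP
  have hdisj : Disjoint N.support P.support := by
    rw [Set.disjoint_left]
    intro a ha hap
    have ha' : a ∈ M.verts \ {w, x} := N.support_subset_verts ha
    have hap' : a ∈ ({v, w} : Set V) := by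
      have := P.support_subset_verts hap
      simpa [hP] using this
    rcases hap' with rfl | rfl
    · exact hvN ha'.1
    · exact ha'.2 (Set.mem_insert _ _)
  have hM'match : (N ⊔ P).IsMatching := hNmatch.sup (Subgraph.IsMatching.subgraphOfAdj hvw) hdisj
  -- edge set computation
  have hNedge : N.edgeSet = M.edgeSet \ {s(w, x)} := by
    ext e
    induction e with
    | _ a b =>
      simp only [Subgraph.mem_edgeSet, Set.mem_diff, Set.mem_singleton_iff]
      constructor
      · rintro ⟨ha, hb, hab⟩
        refine ⟨hab, ?_⟩
        intro heq
        have : a = w ∨ a = x := by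
          have : a ∈ s(w, x) := heq ▸ Sym2.mem_mk_left a b
          exact Sym2.mem_iff.mp this
        rcases this with rfl | rfl
        · exact ha.2 (Set.mem_insert _ _)
        · exact ha.2 (by right; rfl)
      · rintro ⟨hab, hne⟩
        have haw : a ∉ ({w, x} : Set V) := by
          rintro (rfl | rfl)
          · obtain ⟨y, _, hy⟩ := hM (M.edge_vert hab)
            exact hne (by rw [hy b hab, hy x hwx])
          · obtain ⟨y, _, hy⟩ := hM (M.edge_vert hab)
            have : b = w := by
              have h1 := hy b hab
              obtain ⟨y', _, hy'⟩ := hM (M.edge_vert hwx.symm)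
              rw [hy b hab, hy w hwx.symm]
            exact hne (by rw [this, Sym2.eq_swap])
        exact ⟨⟨M.edge_vert hab, haw⟩, ⟨M.edge_vert hab.symm, hpart a b hab haw⟩, hab⟩
  have hPedge : P.edgeSet = {s(v, w)} := G.edgeSet_subgraphOfAdj hvw
  have hvwe : s(v, w) ∉ M.edgeSet := by
    intro h
    exact hv ⟨w, Subgraph.mem_edgeSet.mp h⟩
  have hwxe : s(w, x) ∈ M.edgeSet := hwx
  have hM'edge : (N ⊔ P).edgeSet.ncard = muNum G := by
    rw [Subgraph.edgeSet_sup, hNedge, hPedge, Set.union_singleton,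
      Set.ncard_insert_of_notMem (a := s(v, w)) (s := M.edgeSet \ {s(w, x)}) (fun h => hvwe h.1) (Set.toFinite _),
      Set.ncard_diff_singleton_add_one hwxe (Set.toFinite _)] at *
    exact hμ
  have hvsup : v ∈ (N ⊔ P).support := ⟨w, Or.inr (by simp [hP])⟩
  exact main_case hKE hcore hM'match hM'edge hvsup



end AuxProof

theorem stmt_4 [Fintype V] (G : SimpleGraph V) (hKE : KonigEgervary G)
    (hiso : ∀ v : V, ∃ w : V, G.Adj v w) (v : V) (hcore : coreSet G = {v}) :
    (∃ M : SimpleGraph.Subgraph G, M.IsPerfectMatching) ∧ (G.neighborSet v).ncard = 1 := by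
  exact stmt_4_aux G hKE hiso v hcore
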